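/- arXiv:2105.04803 — 2 statements merged into one kernel-verified Lean document; each statement's English description precedes it below -/
import Mathlib

section
/- Let e(g) = Σ_{i=0}^{s} t_i·2^{t_i−1} + Σ_{i=0}^{s} i·2^{t_i} (binary expansion of g with exponents t_0 > ... > t_s). For n ≥ 2, the function g ↦ n·g − e(g) is strictly increasing on the range 1 ≤ g ≤ 2^{⌈n/2⌉}. -/
/-- The strictly decreasing list of exponents `t_0 > t_1 > ⋯ > t_s` in the
binary expansion `g = Σ_{i=0}^{s} 2^(t_i)` of `g`. -/
def expList (g : ℕ) : List ℕ :=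
  (((Finset.range (g + 1)).filter (fun k => g.testBit k)).sort (· ≤ ·)).reverse

/-- `e g = Σ_{i=0}^{s} t_i·2^(t_i−1) + Σ_{i=0}^{s} i·2^(t_i)` over the binary
expansion `g = Σ_{i=0}^{s} 2^(t_i)` with `t_0 > t_1 > ⋯ > t_s ≥ 0` (and `e 0 = 0`). -/
def eHL (g : ℕ) : ℕ :=
  ((expList g).zipIdx.map (fun p => p.1 * 2 ^ (p.1 - 1) + p.2 * 2 ^ p.1)).sum

lemma mem_bitIndices : ∀ (n a : ℕ), a ∈ n.bitIndices ↔ n.testBit a := by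
  intro n
  induction n using Nat.strong_induction_on with
  | _ n ih =>
    intro a
    rcases Nat.eq_zero_or_pos n with rfl | hn
    · simp
    rcases Nat.even_or_odd n with ⟨h, rfl⟩ | ⟨h, rfl⟩
    · have hh : h < h + h := by omega
      rw [(by ring : h + h = 2 * h)]
      cases a with
      | zero => simp [Nat.bitIndices_two_mul, Nat.testBit_zero, Nat.mul_mod_right]
      | succ a =>
        rw [Nat.bitIndices_two_mul, Nat.testBit_succ, Nat.mul_div_cancel_left _ (by norm_num : 0 < 2)]
        rw [← ih h (by omega) a]
        simp [List.mem_map]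
    · cases a with
      | zero => simp [Nat.bitIndices_two_mul_add_one, Nat.testBit_zero, Nat.add_mul_mod_self_left, Nat.mul_add_mod]
      | succ a =>
        rw [Nat.bitIndices_two_mul_add_one, Nat.testBit_succ,
          (by omega : (2 * h + 1) / 2 = h), ← ih h (by omega) a]
        simp [List.mem_map]


lemma expList_eq (g : ℕ) : expList g = g.bitIndices.reverse := by
  unfold expList
  congr 1
  apply List.Perm.eq_of_sortedLE (Finset.pairwise_sort _ _).sortedLE Nat.bitIndices_sorted.sortedLE
    ((List.perm_ext_iff_of_nodup (Finset.sort_nodup _ _)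
      Nat.bitIndices_sorted.nodup).2 ?_)
  intro a
  rw [Finset.mem_sort, Finset.mem_filter, Finset.mem_range, mem_bitIndices]
  constructor
  · exact fun h => h.2
  · intro h
    refine ⟨?_, h⟩
    have h1 : 2 ^ a ≤ g := Nat.two_pow_le_of_mem_bitIndices ((mem_bitIndices g a).2 h)
    have h2 : a < 2 ^ a := Nat.lt_two_pow_self
    omega

lemma F_map_succ (R : List ℕ) :
    ((R.map (· + 1)).zipIdx.map (fun p => p.1 * 2 ^ (p.1 - 1) + p.2 * 2 ^ p.1)).sum
      = 2 * (R.zipIdx.map (fun p => p.1 * 2 ^ (p.1 - 1) + p.2 * 2 ^ p.1)).sum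
        + (R.map (2 ^ ·)).sum := by
  rw [List.zipIdx_map, List.map_map]
  have h1 : ((fun p : ℕ × ℕ => p.1 * 2 ^ (p.1 - 1) + p.2 * 2 ^ p.1) ∘ Prod.map (· + 1) id)
      = fun p : ℕ × ℕ => (2 * (p.1 * 2 ^ (p.1 - 1) + p.2 * 2 ^ p.1)) + 2 ^ p.1 := by
    funext p
    obtain ⟨t, i⟩ := p
    simp only [Function.comp_apply, Prod.map, id]
    cases t with
    | zero => simp; ring
    | succ t => simp only [Nat.add_sub_cancel, pow_succ]; ring
  rw [h1, List.sum_map_add, ← List.sum_map_mul_left]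
  congr 1
  rw [show (fun p : ℕ × ℕ => 2 ^ p.1) = (fun t => 2 ^ t) ∘ Prod.fst from rfl,
    ← List.map_map, List.zipIdx_map_fst]

lemma eHL_two_mul (h : ℕ) : eHL (2 * h) = 2 * eHL h + h := by
  unfold eHL
  rw [expList_eq, expList_eq, Nat.bitIndices_two_mul, ← List.map_reverse, F_map_succ]
  congr 1
  rw [List.map_reverse, List.sum_reverse]
  exact Nat.sum_map_two_pow_bitIndices h

lemma eHL_two_mul_add_one (h : ℕ) :
    eHL (2 * h + 1) = eHL (2 * h) + h.bitIndices.length := by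
  unfold eHL
  rw [expList_eq, expList_eq, Nat.bitIndices_two_mul, Nat.bitIndices_two_mul_add_one]
  rw [List.reverse_cons, List.zipIdx_append, List.map_append, List.sum_append]
  congr 1
  simp [List.zipIdx_singleton]

lemma eHL_succ : ∀ g : ℕ, eHL (g + 1) = eHL g + g.bitIndices.length := by
  intro g
  induction g using Nat.strong_induction_on with
  | _ g ih =>
    rcases Nat.even_or_odd g with ⟨h, rfl⟩ | ⟨h, rfl⟩
    · rw [(by ring : h + h = 2 * h), eHL_two_mul_add_one, Nat.bitIndices_two_mul,
        List.length_map]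
    · have key : 2 * h + 1 + 1 = 2 * (h + 1) := by ring
      rw [key, eHL_two_mul, ih h (by omega), Nat.bitIndices_two_mul_add_one,
        eHL_two_mul_add_one, eHL_two_mul]
      simp only [List.length_cons, List.length_map]
      ring

lemma length_bitIndices_le {g m : ℕ} (hg : g < 2 ^ m) : g.bitIndices.length ≤ m := by
  have hnd : g.bitIndices.Nodup := Nat.bitIndices_sorted.nodup
  have hsub : g.bitIndices.toFinset ⊆ Finset.range m := by
    intro a ha
    rw [List.mem_toFinset] at ha
    rw [Finset.mem_range]
    have h1 := Nat.two_pow_le_of_mem_bitIndices ha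
    by_contra hc
    push_neg at hc
    exact absurd (lt_of_le_of_lt (le_trans (Nat.pow_le_pow_right (by norm_num) hc) h1) hg)
      (lt_irrefl _)
  calc g.bitIndices.length = g.bitIndices.toFinset.card := (List.toFinset_card_of_nodup hnd).symm
    _ ≤ (Finset.range m).card := Finset.card_le_card hsub
    _ = m := Finset.card_range m

lemma step (n : ℕ) (hn : 2 ≤ n) (g : ℕ) (hg2 : g + 1 ≤ 2 ^ ((n + 1) / 2)) :
    (n * g : ℤ) - eHL g < (n * (g + 1) : ℤ) - eHL (g + 1) := by
  have h1 : g.bitIndices.length ≤ (n + 1) / 2 := length_bitIndices_le (by omega)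
  have h2 : eHL (g + 1) = eHL g + g.bitIndices.length := eHL_succ g
  have h3 : g.bitIndices.length < n := by omega
  rw [h2, mul_add, mul_one]
  push_cast
  omega


/-- For `n ≥ 2`, the function `g ↦ n·g − e g` is strictly increasing on the
range `1 ≤ g ≤ 2^⌈n/2⌉`. -/
theorem eHL_strict_mono (n : ℕ) (hn : 2 ≤ n) :
    ∀ g₁ g₂ : ℕ, 1 ≤ g₁ → g₁ < g₂ → g₂ ≤ 2 ^ ((n + 1) / 2) →
      (n * g₁ : ℤ) - eHL g₁ < (n * g₂ : ℤ) - eHL g₂ := by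
  intro g₁ g₂ h1 hlt
  induction g₂, hlt using Nat.le_induction with
  | base => intro hle; exact step n hn g₁ hle
  | succ k hk ih =>
    intro hle
    have hs := step n hn k (by omega)
    rcases Nat.lt_or_ge g₁ k with h | h
    · exact lt_trans (ih (by omega)) (by exact_mod_cast hs)
    · have : g₁ = k := by omega
      subst this
      exact_mod_cast hs
end

section
/- Let n ≥ 8, t_0 = n − 2, and m be any integer with 2^{n−2} ≤ m < 2^{n−1}. Then n·m − 2·e(m) ≥ (n − t_0)·2^{t_0} > (3n/4)·2^{⌈n/2⌉} ≥ n·2^{⌈n/2⌉} − e(2^{⌈n/2⌉}), where e is the function e(g) = Σ t_i·2^{t_i−1} + Σ i·2^{t_i} defined via the binary expansion of g. -/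
def bitSet (g : ℕ) : Finset ℕ := (Finset.range (g + 1)).filter (fun k => g.testBit k)

lemma mem_bitSet {g k : ℕ} : k ∈ bitSet g ↔ g.testBit k := by
  simp only [bitSet, Finset.mem_filter, Finset.mem_range, and_iff_right_iff_imp]
  intro h
  have := Nat.ge_two_pow_of_testBit h
  calc k < 2 ^ k := Nat.lt_two_pow_self
    _ ≤ g + 1 := le_trans this (Nat.le_succ g)

lemma bitSet_two_pow_add {t r : ℕ} (h : r < 2 ^ t) :
    bitSet (2 ^ t + r) = insert t (bitSet r) := by
  ext k
  simp only [mem_bitSet, Finset.mem_insert]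
  rcases lt_trichotomy k t with hk | hk | hk
  · rw [Nat.testBit_two_pow_add_gt hk]
    simp [hk.ne]
  · subst hk
    rw [Nat.testBit_two_pow_add_eq, Nat.testBit_lt_two_pow h]
    simp
  · have h1 : 2 ^ t + r < 2 ^ k := by
      have := Nat.pow_le_pow_right (show 0 < 2 by norm_num) hk
      have h2 : 2 ^ (t + 1) = 2 ^ t + 2 ^ t := by ring
      omega
    rw [Nat.testBit_lt_two_pow h1, Nat.testBit_lt_two_pow (lt_of_lt_of_le h (by
      exact Nat.pow_le_pow_right (by norm_num) (le_of_lt hk)))]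
    simp [hk.ne']

lemma sort_insert_max {t : ℕ} {s : Finset ℕ} (h : ∀ x ∈ s, x < t) :
    (insert t s).sort (· ≤ ·) = s.sort (· ≤ ·) ++ [t] := by
  have ht : t ∉ s := fun hm => lt_irrefl t (h t hm)
  have hperm : List.Perm ((insert t s).sort (· ≤ ·)) (s.sort (· ≤ ·) ++ [t]) :=
    (Finset.sort_perm_toList _ _).trans ((Finset.toList_insert ht).trans
      (((Finset.sort_perm_toList _ _).symm.cons t).trans
        (List.perm_append_singleton t _).symm))
  refine List.Perm.eq_of_pairwise' (Finset.pairwise_sort _ _) ?_ hperm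
  rw [List.pairwise_append]
  refine ⟨Finset.pairwise_sort _ _, List.pairwise_singleton _ _, ?_⟩
  intro a ha b hb
  simp only [List.mem_singleton] at hb; subst hb
  exact le_of_lt (h a (by rwa [Finset.mem_sort] at ha))

lemma expList_eq_s11 (g : ℕ) : expList g = ((bitSet g).sort (· ≤ ·)).reverse := rfl

lemma expList_two_pow_add {t r : ℕ} (h : r < 2 ^ t) :
    expList (2 ^ t + r) = t :: expList r := by
  rw [expList_eq_s11, expList_eq_s11, bitSet_two_pow_add h,
    sort_insert_max (fun x hx => by
      have h2 := Nat.ge_two_pow_of_testBit (mem_bitSet.mp hx)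
      by_contra hc
      push_neg at hc
      have := Nat.pow_le_pow_right (show 0 < 2 by norm_num) hc
      omega)]
  simp

lemma expList_zero : expList 0 = [] := by
  simp [expList]

lemma exists_decomp {g : ℕ} (hg : 0 < g) : ∃ a r, r < 2 ^ a ∧ g = 2 ^ a + r := by
  refine ⟨Nat.log2 g, g - 2 ^ Nat.log2 g, ?_, ?_⟩ <;>
  · have h1 : 2 ^ Nat.log2 g ≤ g := Nat.log2_self_le (by omega)
    have h2 : g < 2 ^ (Nat.log2 g + 1) := Nat.lt_log2_self
    have hp : 2 ^ (Nat.log2 g + 1) = 2 ^ Nat.log2 g + 2 ^ Nat.log2 g := by ring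
    omega

lemma sum_two_pow_expList (g : ℕ) : ((expList g).map (2 ^ ·)).sum = g := by
  induction g using Nat.strong_induction_on with
  | _ g ih =>
    rcases Nat.eq_zero_or_pos g with hg | hg
    · subst hg; simp [expList_zero]
    · obtain ⟨a, r, hr, rfl⟩ := exists_decomp hg
      have hpos : 0 < 2 ^ a := Nat.two_pow_pos a
      rw [expList_two_pow_add hr]
      simp only [List.map_cons, List.sum_cons]
      rw [ih r (by omega)]

lemma enumFrom_sum (L : List ℕ) : ∀ k : ℕ,
    ((L.zipIdx k).map (fun p : ℕ × ℕ => p.1 * 2 ^ (p.1 - 1) + p.2 * 2 ^ p.1)).sum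
      = ((L.zipIdx 0).map (fun p : ℕ × ℕ => p.1 * 2 ^ (p.1 - 1) + p.2 * 2 ^ p.1)).sum
        + k * (L.map (2 ^ ·)).sum := by
  induction L with
  | nil => simp [List.zipIdx]
  | cons a L ih =>
    intro k
    simp only [List.zipIdx_cons, List.map_cons, List.sum_cons, ih (k + 1), ih 1]
    ring

lemma eHL_two_pow_add {t r : ℕ} (h : r < 2 ^ t) :
    eHL (2 ^ t + r) = t * 2 ^ (t - 1) + eHL r + r := by
  unfold eHL
  rw [expList_two_pow_add h, List.zipIdx_cons]
  simp only [List.map_cons, List.sum_cons]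
  rw [enumFrom_sum (expList r) 1]
  have : (expList r).zipIdx = (expList r).zipIdx 0 := rfl
  rw [this, sum_two_pow_expList]
  ring

lemma eHL_zero : eHL 0 = 0 := by simp [eHL, expList_zero]

lemma eHL_two_pow (k : ℕ) : eHL (2 ^ k) = k * 2 ^ (k - 1) := by
  have := eHL_two_pow_add (t := k) (r := 0) (Nat.two_pow_pos k)
  simpa [eHL_zero] using this

lemma two_eHL_le {g : ℕ} : ∀ {t : ℕ}, g < 2 ^ t → 2 * eHL g ≤ t * g := by
  induction g using Nat.strong_induction_on with
  | _ g ih =>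
    intro t h
    rcases Nat.eq_zero_or_pos g with hg | hg
    · subst hg; simp [eHL_zero]
    · obtain ⟨a, r, hr, rfl⟩ := exists_decomp hg
      have hpos : 0 < 2 ^ a := Nat.two_pow_pos a
      have hat : a + 1 ≤ t := by
        by_contra hc
        push_neg at hc
        have := Nat.pow_le_pow_right (show 0 < 2 by norm_num) (show t ≤ a by omega)
        omega
      have he : eHL (2 ^ a + r) = a * 2 ^ (a - 1) + eHL r + r := eHL_two_pow_add hr
      have hih : 2 * eHL r ≤ a * r := ih r (by omega) hr
      have h2a : 2 * (a * 2 ^ (a - 1)) = a * 2 ^ a ∨ a = 0 := by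
        rcases Nat.eq_zero_or_pos a with ha | ha
        · exact Or.inr ha
        · left
          have h2 : 2 ^ a = 2 * 2 ^ (a - 1) := by
            conv_lhs => rw [show a = (a - 1) + 1 by omega]
            ring
          rw [h2]; ring
      have e1 : (a + 1) * 2 ^ a = a * 2 ^ a + 2 ^ a := by ring
      have e2 : (a + 1) * r = a * r + r := by ring
      have e3 : t * (2 ^ a + r) = t * 2 ^ a + t * r := by ring
      have f1 : (a + 1) * 2 ^ a ≤ t * 2 ^ a := Nat.mul_le_mul_right _ hat
      have f2 : (a + 1) * r ≤ t * r := Nat.mul_le_mul_right _ hat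
      rcases h2a with h2a | h2a
      · omega
      · subst h2a
        simp [eHL_zero] at he hih ⊢
        omega

lemma three_lt_pow : ∀ {k : ℕ}, 4 ≤ k → 3 * k + 2 < 2 ^ k := by
  intro k
  induction k with
  | zero => omega
  | succ k ih =>
    intro h
    rcases Nat.lt_or_ge k 4 with hk | hk
    · interval_cases k <;> simp_all
    · have h1 := ih hk
      have h2 : 2 ^ (k + 1) = 2 ^ k + 2 ^ k := by ring
      omega

theorem case1_chain (n m : ℕ) (hn : 8 ≤ n) (h₁ : 2 ^ (n - 2) ≤ m) (h₂ : m < 2 ^ (n - 1)) :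
    ((n : ℚ) * m - 2 * eHL m ≥ ((n : ℚ) - (n - 2 : ℕ)) * 2 ^ (n - 2)) ∧
    (((n : ℚ) - (n - 2 : ℕ)) * 2 ^ (n - 2) > (3 * (n : ℚ) / 4) * 2 ^ ((n + 1) / 2)) ∧
    ((3 * (n : ℚ) / 4) * 2 ^ ((n + 1) / 2) ≥
      (n : ℚ) * 2 ^ ((n + 1) / 2) - eHL (2 ^ ((n + 1) / 2))) := by
  set t := n - 2 with hts
  set k := (n + 1) / 2 with hks
  have hcast : ((n : ℚ) - (t : ℕ)) = 2 := by
    have : (t : ℚ) = (n : ℚ) - 2 := by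
      rw [hts]
      push_cast [Nat.cast_sub (by omega : 2 ≤ n)]
      ring
    rw [this]; ring
  have hn1 : n - 1 = t + 1 := by omega
  -- Part 1 (nat version)
  have hr : m - 2 ^ t < 2 ^ t := by
    have h₂' : m < 2 ^ (t + 1) := by rw [← hn1]; exact h₂
    have : 2 ^ (t + 1) = 2 ^ t + 2 ^ t := by ring
    omega
  have hm' : m = 2 ^ t + (m - 2 ^ t) := by omega
  have heq : eHL m = t * 2 ^ (t - 1) + eHL (m - 2 ^ t) + (m - 2 ^ t) := by
    conv_lhs => rw [hm']
    exact eHL_two_pow_add hr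
  have hle : 2 * eHL (m - 2 ^ t) ≤ t * (m - 2 ^ t) := two_eHL_le hr
  have h2t : 2 * (t * 2 ^ (t - 1)) = t * 2 ^ t := by
    have h2 : 2 ^ t = 2 * 2 ^ (t - 1) := by
      conv_lhs => rw [show t = (t - 1) + 1 by omega]
      ring
    rw [h2]; ring
  have hnat1 : 2 * eHL m + 2 * 2 ^ t ≤ n * m := by
    have e1 : n * m = (t + 2) * m := by congr 1; omega
    have e2 : (t + 2) * m = t * 2 ^ t + t * (m - 2 ^ t) + 2 * 2 ^ t + 2 * (m - 2 ^ t) := by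
      conv_lhs => rw [hm']
      ring
    omega
  -- Part 2 (nat version): 3 * n * 2 ^ k < 4 * 2 ^ (n - 2) * 2
  have hk2 : n ≤ 2 * k := by omega
  have hnat2 : 3 * n * 2 ^ k < 8 * 2 ^ (n - 2) := by
    have half : 4 ≤ n / 2 := by omega
    have hp := three_lt_pow half
    have h3n : 3 * n < 2 * 2 ^ (n / 2) := by
      have : n ≤ 2 * (n / 2) + 1 := by omega
      have h2 : 2 ^ (n / 2) ≥ 3 * (n / 2) + 3 := by omega
      omega
    have hsplit : 8 * 2 ^ (n - 2) = 2 * 2 ^ (n / 2) * 2 ^ k := by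
      have : 2 * 2 ^ (n / 2) * 2 ^ k = 2 ^ (n / 2 + k + 1) := by ring
      rw [this]
      have : 8 * 2 ^ (n - 2) = 2 ^ (n + 1) := by
        rw [show n + 1 = (n - 2) + 3 by omega]
        ring
      rw [this]
      congr 1
      omega
    calc 3 * n * 2 ^ k < 2 * 2 ^ (n / 2) * 2 ^ k :=
          (Nat.mul_lt_mul_right (Nat.two_pow_pos k)).mpr h3n
      _ = 8 * 2 ^ (n - 2) := hsplit.symm
  -- Part 3 (nat version): 4 * n * 2 ^ k ≤ 3 * n * 2 ^ k + 4 * eHL (2 ^ k)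
  have hknz : 1 ≤ k := by omega
  have hek : eHL (2 ^ k) = k * 2 ^ (k - 1) := eHL_two_pow k
  have h2k : 2 ^ k = 2 * 2 ^ (k - 1) := by
    conv_lhs => rw [show k = (k - 1) + 1 by omega]
    ring
  have hnat3 : 4 * n * 2 ^ k ≤ 3 * n * 2 ^ k + 4 * eHL (2 ^ k) := by
    rw [hek, h2k]
    have : n * 2 ^ (k - 1) ≤ 2 * k * 2 ^ (k - 1) := Nat.mul_le_mul_right _ (by omega)
    nlinarith
  refine ⟨?_, ?_, ?_⟩
  · rw [hcast]
    have := (Nat.cast_le (α := ℚ)).mpr hnat1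
    push_cast at this
    have h2 : ((2 : ℚ)) * 2 ^ t = ((2 * 2 ^ t : ℕ) : ℚ) := by push_cast; ring
    linarith
  · rw [hcast]
    have := (Nat.cast_lt (α := ℚ)).mpr hnat2
    push_cast at this
    linarith
  · have := (Nat.cast_le (α := ℚ)).mpr hnat3
    push_cast at this
    linarith
end
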